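/- Let F be an algebraically closed field containing a primitive 3rd root of unity ζ, and let P_1, Q_1, P_2, Q_2 ∈ F[u,v] be homogeneous of degree 2 with gcd(P_i, Q_i) = 1 and P_1^3 - Q_1^3 = P_2^3 - Q_2^3. Set G^{l,r} = gcd(P_1 - ζ^l P_2, Q_1 - ζ^r Q_2) and M^{l,r} = deg G^{l,r} for 0 ≤ l, r ≤ 2. Then every row sum and every column sum of the 3×3 matrix (M^{l,r}) equals 2. -/

import Mathlib

open MvPolynomial

private lemma finsupp_degree_add {σ : Type*} (a b : σ →₀ ℕ) :
    (a + b).degree = a.degree + b.degree := by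
  simp [Finsupp.degree_eq_weight_one, map_add]

private lemma tdeg_mul {F σ : Type*} [Field F] {p q : MvPolynomial σ F}
    (hp : p ≠ 0) (hq : q ≠ 0) :
    (p * q).totalDegree = p.totalDegree + q.totalDegree := by
  classical
  refine le_antisymm (totalDegree_mul p q) ?_
  set d := p.totalDegree with hd
  set e := q.totalDegree with he
  have hcomp : homogeneousComponent (d + e) (p * q)
      = homogeneousComponent d p * homogeneousComponent e q := by
    ext m
    rw [coeff_homogeneousComponent, coeff_mul, coeff_mul]
    split_ifs with hm
    · refine Finset.sum_congr rfl fun x hx => ?_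
      rw [Finset.HasAntidiagonal.mem_antidiagonal] at hx
      rw [coeff_homogeneousComponent, coeff_homogeneousComponent]
      have hxm : x.1.degree + x.2.degree = d + e := by rw [← finsupp_degree_add, hx, hm]
      by_cases h1 : x.1.degree = d
      · rw [if_pos h1, if_pos (by omega : x.2.degree = e)]
      · rw [if_neg h1]
        rcases lt_or_gt_of_ne h1 with h | h
        · have h2 : e < x.2.degree := by omega
          have : coeff x.2 q = 0 := coeff_eq_zero_of_totalDegree_lt h2
          simp [this]
        · have : coeff x.1 p = 0 := coeff_eq_zero_of_totalDegree_lt h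
          simp [this]
    · symm
      refine Finset.sum_eq_zero fun x hx => ?_
      rw [Finset.HasAntidiagonal.mem_antidiagonal] at hx
      rw [coeff_homogeneousComponent, coeff_homogeneousComponent]
      by_cases h1 : x.1.degree = d
      · have h2 : x.2.degree ≠ e := by
          intro h2; exact hm (by rw [← hx, finsupp_degree_add, h1, h2])
        rw [if_neg h2, mul_zero]
      · rw [if_neg h1, zero_mul]
  have hnz : ∀ (f : MvPolynomial σ F), f ≠ 0 →
      homogeneousComponent f.totalDegree f ≠ 0 := by
    intro f hf
    obtain ⟨m, hm, hsup⟩ := Finset.exists_mem_eq_sup f.support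
      (support_nonempty.mpr hf) (fun s => s.sum fun _ e => e)
    have hmd : m.degree = f.totalDegree := by
      rw [totalDegree, hsup]; rfl
    intro h0
    have := coeff_homogeneousComponent (σ := σ) (R := F) f.totalDegree f m
    rw [h0, if_pos hmd, coeff_zero] at this
    exact (mem_support_iff.mp hm) this.symm
  have hne : homogeneousComponent (d + e) (p * q) ≠ 0 := by
    rw [hcomp]
    exact mul_ne_zero (hnz p hp) (hnz q hq)
  exact le_of_not_gt fun hlt => hne (homogeneousComponent_eq_zero _ _ hlt)

private lemma tdeg_dvd_le {F σ : Type*} [Field F] {p q : MvPolynomial σ F}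
    (h : p ∣ q) (hq : q ≠ 0) : p.totalDegree ≤ q.totalDegree := by
  obtain ⟨c, rfl⟩ := h
  have hp : p ≠ 0 := fun h => hq (by rw [h, zero_mul])
  have hc : c ≠ 0 := fun h => hq (by rw [h, mul_zero])
  rw [tdeg_mul hp hc]
  exact Nat.le_add_right _ _

private lemma unit_of_tdeg_zero {F σ : Type*} [Field F] {p : MvPolynomial σ F}
    (hp : p ≠ 0) (h : p.totalDegree = 0) : IsUnit p := by
  classical
  rw [totalDegree_eq_zero_iff] at h
  have hpc : p = C (coeff 0 p) := by
    ext m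
    by_cases hm : m ∈ p.support
    · have hm0 : m = 0 := Finsupp.ext fun x => h m hm x
      subst hm0; simp [coeff_C]
    · rw [notMem_support_iff] at hm
      rw [hm, coeff_C]
      split_ifs with h0
      · rw [← h0] at hm; exact hm.symm
      · rfl
  have hc : coeff 0 p ≠ 0 := fun h0 => hp (by rw [hpc, h0, map_zero])
  rw [hpc]
  exact (Ne.isUnit hc).map C

private lemma rowSum {F : Type*} [Field F]
    (ζ : F) (hζ : IsPrimitiveRoot ζ 3)
    (P₁ Q₁ P₂ Q₂ : MvPolynomial (Fin 2) F)
    (hP₁ : P₁.IsHomogeneous 2) (hP₂ : P₂.IsHomogeneous 2)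
    (hcop2 : ∀ d, d ∣ P₂ → d ∣ Q₂ → IsUnit d)
    (heq : P₁ ^ 3 - P₂ ^ 3 = Q₁ ^ 3 - Q₂ ^ 3)
    (hPne : ∀ l : Fin 3, P₁ ≠ C (ζ ^ (l : ℕ)) * P₂)
    (G : Fin 3 → Fin 3 → MvPolynomial (Fin 2) F)
    (hG1 : ∀ l r, G l r ∣ P₁ - C (ζ ^ (l : ℕ)) * P₂)
    (hG2 : ∀ l r, G l r ∣ Q₁ - C (ζ ^ (r : ℕ)) * Q₂)
    (hGmax : ∀ (l r : Fin 3) (d : MvPolynomial (Fin 2) F),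
      d ∣ P₁ - C (ζ ^ (l : ℕ)) * P₂ → d ∣ Q₁ - C (ζ ^ (r : ℕ)) * Q₂ → d ∣ G l r)
    (l : Fin 3) :
    ∑ r, (G l r).totalDegree = 2 := by
  have hζ3 : ζ ^ 3 = 1 := hζ.pow_eq_one
  have hζs : 1 + ζ + ζ ^ 2 = 0 := by
    have := hζ.geom_sum_eq_zero (by norm_num)
    simpa [Finset.sum_range_succ] using this
  set A : Fin 3 → MvPolynomial (Fin 2) F := fun i => P₁ - C (ζ ^ (i : ℕ)) * P₂ with hA
  set B : Fin 3 → MvPolynomial (Fin 2) F := fun i => Q₁ - C (ζ ^ (i : ℕ)) * Q₂ with hB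
  have hc3 : (C ζ : MvPolynomial (Fin 2) F) ^ 3 = 1 := by
    rw [← map_pow, hζ3, map_one]
  have hcs : (1 : MvPolynomial (Fin 2) F) + C ζ + (C ζ) ^ 2 = 0 := by
    have := congrArg (C : F →+* MvPolynomial (Fin 2) F) hζs
    simpa [map_add, map_pow] using this
  have hprod3 : ∀ X Y : MvPolynomial (Fin 2) F,
      (X - C (ζ ^ ((0 : Fin 3) : ℕ)) * Y) * (X - C (ζ ^ ((1 : Fin 3) : ℕ)) * Y) *
        (X - C (ζ ^ ((2 : Fin 3) : ℕ)) * Y) = X ^ 3 - Y ^ 3 := by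
    intro X Y
    have h0 : ((0 : Fin 3) : ℕ) = 0 := rfl
    have h1 : ((1 : Fin 3) : ℕ) = 1 := rfl
    have h2 : ((2 : Fin 3) : ℕ) = 2 := rfl
    rw [h0, h1, h2, pow_zero, pow_one, map_one, map_pow]
    linear_combination (X * Y ^ 2 - X ^ 2 * Y) * hcs + (X * Y ^ 2 - Y ^ 3) * hc3
  have hprodA : A 0 * A 1 * A 2 = P₁ ^ 3 - P₂ ^ 3 := hprod3 P₁ P₂
  have hprodB : B 0 * B 1 * B 2 = Q₁ ^ 3 - Q₂ ^ 3 := hprod3 Q₁ Q₂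
  have hAB : A 0 * A 1 * A 2 = B 0 * B 1 * B 2 := by rw [hprodA, hprodB, heq]
  have hAne : ∀ i, A i ≠ 0 := fun i => sub_ne_zero.mpr (hPne i)
  have hAhom : ∀ i, (A i).IsHomogeneous 2 := fun i =>
    hP₁.sub ((isHomogeneous_C _ _).mul hP₂)
  have hAdeg : ∀ i, (A i).totalDegree = 2 := fun i => (hAhom i).totalDegree (hAne i)
  have hζinj : ∀ i j : Fin 3, i ≠ j → ζ ^ (i : ℕ) ≠ ζ ^ (j : ℕ) := by
    intro i j hij h
    exact hij (Fin.ext (hζ.pow_inj i.isLt j.isLt h))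
  have hCunit : ∀ i j : Fin 3, i ≠ j →
      IsUnit ((C (ζ ^ (j : ℕ)) - C (ζ ^ (i : ℕ))) : MvPolynomial (Fin 2) F) := by
    intro i j hij
    rw [← map_sub]
    exact (Ne.isUnit (sub_ne_zero.mpr (hζinj j i hij.symm))).map C
  have hBB : ∀ (i j : Fin 3) (d : MvPolynomial (Fin 2) F), i ≠ j → d ∣ B i → d ∣ B j →
      d ∣ Q₁ ∧ d ∣ Q₂ := by
    intro i j d hij hdi hdj
    have hdiff : B i - B j = (C (ζ ^ (j : ℕ)) - C (ζ ^ (i : ℕ))) * Q₂ := by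
      simp only [hB]; ring
    have h2 : d ∣ (C (ζ ^ (j : ℕ)) - C (ζ ^ (i : ℕ))) * Q₂ :=
      hdiff ▸ dvd_sub hdi hdj
    obtain ⟨u, hu⟩ := hCunit i j hij
    have hQ2 : d ∣ Q₂ := by
      rw [← hu] at h2
      exact (Units.dvd_mul_left).mp h2
    refine ⟨?_, hQ2⟩
    have : Q₁ = B i + C (ζ ^ (i : ℕ)) * Q₂ := by simp only [hB]; ring
    rw [this]
    exact dvd_add hdi (hQ2.mul_left _)
  have hkey : ∀ d : MvPolynomial (Fin 2) F, d ∣ A l → d ∣ Q₁ → d ∣ Q₂ → IsUnit d := by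
    intro d hdA hd1 hd2
    by_contra hu
    have hd0 : d ≠ 0 := fun h => hAne l (zero_dvd_iff.mp (h ▸ hdA))
    obtain ⟨p, hpirr, hpd⟩ := WfDvdMonoid.exists_irreducible_factor hu hd0
    have hp1 : p ∣ Q₁ := hpd.trans hd1
    have hp2 : p ∣ Q₂ := hpd.trans hd2
    have hpA : p ∣ A l := hpd.trans hdA
    have hpB : ∀ r, p ∣ B r := fun r => dvd_sub hp1 (hp2.mul_left _)
    have hp3 : p ^ 3 ∣ A 0 * A 1 * A 2 := by
      rw [hAB, pow_succ, pow_two]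
      exact mul_dvd_mul (mul_dvd_mul (hpB 0) (hpB 1)) (hpB 2)
    have hprime : Prime p := hpirr.prime
    have hnotA : ∀ i, i ≠ l → ¬ p ∣ A i := by
      intro i hil hpAi
      have hdiff : A l - A i = (C (ζ ^ (i : ℕ)) - C (ζ ^ (l : ℕ))) * P₂ := by
        simp only [hA]; ring
      have h2 : p ∣ (C (ζ ^ (i : ℕ)) - C (ζ ^ (l : ℕ))) * P₂ := hdiff ▸ dvd_sub hpA hpAi
      obtain ⟨u, hu⟩ := hCunit l i hil.symm
      have hP2 : p ∣ P₂ := by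
        rw [← hu] at h2
        exact (Units.dvd_mul_left).mp h2
      exact hpirr.not_isUnit (hcop2 p hP2 hp2)
    have hp3l : p ^ 3 ∣ A l := by
      fin_cases l
      · exact hprime.pow_dvd_of_dvd_mul_right 3 (hnotA 1 (by decide))
          (hprime.pow_dvd_of_dvd_mul_right 3 (hnotA 2 (by decide)) hp3)
      · exact hprime.pow_dvd_of_dvd_mul_left 3 (hnotA 0 (by decide))
          (hprime.pow_dvd_of_dvd_mul_right 3 (hnotA 2 (by decide)) hp3)
      · exact hprime.pow_dvd_of_dvd_mul_left 3
          (fun h => (hprime.dvd_or_dvd h).elim (hnotA 0 (by decide)) (hnotA 1 (by decide)))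
          hp3
    have hpd0 : p.totalDegree ≠ 0 := fun h =>
      hpirr.not_isUnit (unit_of_tdeg_zero hpirr.ne_zero h)
    have hle : (p ^ 3).totalDegree ≤ 2 := by
      have h := tdeg_dvd_le hp3l (hAne l)
      rwa [hAdeg l] at h
    have hppow : (p ^ 3).totalDegree = 3 * p.totalDegree := by
      rw [(by ring : p ^ 3 = p * p * p), tdeg_mul (mul_ne_zero hpirr.ne_zero hpirr.ne_zero)
        hpirr.ne_zero, tdeg_mul hpirr.ne_zero hpirr.ne_zero]
      ring
    omega
  have hGne : ∀ r, G l r ≠ 0 := fun r h => hAne l (zero_dvd_iff.mp (h ▸ hG1 l r))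
  have hrel : ∀ r r' : Fin 3, r ≠ r' → IsRelPrime (G l r) (G l r') := by
    intro r r' hrr d hd hd'
    obtain ⟨h1, h2⟩ := hBB r r' d hrr (hd.trans (hG2 l r)) (hd'.trans (hG2 l r'))
    exact hkey d (hd.trans (hG1 l r)) h1 h2
  have hGdvd : G l 0 * G l 1 * G l 2 ∣ A l := by
    have h01 : G l 0 * G l 1 ∣ A l :=
      (hrel 0 1 (by decide)).mul_dvd (hG1 l 0) (hG1 l 1)
    exact ((hrel 0 2 (by decide)).mul_left (hrel 1 2 (by decide))).mul_dvd h01 (hG1 l 2)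
  have hAdvd : A l ∣ G l 0 * G l 1 * G l 2 := by
    have h : A l ∣ B 0 * B 1 * B 2 := by
      rw [← hAB]
      fin_cases l
      · exact dvd_mul_of_dvd_left (dvd_mul_right (A 0) (A 1)) (A 2)
      · exact dvd_mul_of_dvd_left (dvd_mul_left (A 1) (A 0)) (A 2)
      · exact dvd_mul_left (A 2) (A 0 * A 1)
    obtain ⟨x, y, hx, hy, hxy⟩ := exists_dvd_and_dvd_of_dvd_mul h
    obtain ⟨x0, x1, hx0, hx1, hx01⟩ := exists_dvd_and_dvd_of_dvd_mul hx
    subst hx01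
    have hAeq : A l = x0 * x1 * y := hxy
    have hx0A : x0 ∣ A l := ⟨x1 * y, by rw [hAeq]; ring⟩
    have hx1A : x1 ∣ A l := ⟨x0 * y, by rw [hAeq]; ring⟩
    have hyA : y ∣ A l := ⟨x0 * x1, by rw [hAeq]; ring⟩
    have hd0 : x0 ∣ G l 0 := hGmax l 0 x0 hx0A hx0
    have hd1 : x1 ∣ G l 1 := hGmax l 1 x1 hx1A hx1
    have hd2 : y ∣ G l 2 := hGmax l 2 y hyA hy
    rw [hAeq]
    exact mul_dvd_mul (mul_dvd_mul hd0 hd1) hd2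
  have hGprodne : G l 0 * G l 1 * G l 2 ≠ 0 :=
    mul_ne_zero (mul_ne_zero (hGne 0) (hGne 1)) (hGne 2)
  have h2 : (G l 0 * G l 1 * G l 2).totalDegree = 2 := by
    refine le_antisymm ?_ ?_
    · have h := tdeg_dvd_le hGdvd (hAne l)
      rwa [hAdeg l] at h
    · have h := tdeg_dvd_le hAdvd hGprodne
      rwa [hAdeg l] at h
  rw [tdeg_mul (mul_ne_zero (hGne 0) (hGne 1)) (hGne 2),
    tdeg_mul (hGne 0) (hGne 1)] at h2
  rw [Fin.sum_univ_three]
  exact h2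

open Fin.NatCast in
/-- For `(a,b,c)=(3,3,3)`, `k=2`: the matrix of degrees `M^{l,r} = deg gcd(P_1 - ζ^l P_2,
Q_1 - ζ^r Q_2)` has all row and column sums equal to `2`. -/
theorem stmt_4 {F : Type*} [Field F] [IsAlgClosed F]
    (ζ : F) (hζ : IsPrimitiveRoot ζ 3)
    (P₁ Q₁ P₂ Q₂ : MvPolynomial (Fin 2) F)
    (hP₁ : P₁.IsHomogeneous 2) (hQ₁ : Q₁.IsHomogeneous 2)
    (hP₂ : P₂.IsHomogeneous 2) (hQ₂ : Q₂.IsHomogeneous 2)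
    (hcop1 : ∀ d, d ∣ P₁ → d ∣ Q₁ → IsUnit d)
    (hcop2 : ∀ d, d ∣ P₂ → d ∣ Q₂ → IsUnit d)
    (heq : P₁ ^ 3 - Q₁ ^ 3 = P₂ ^ 3 - Q₂ ^ 3)
    (hPne : ∀ l : Fin 3, P₁ ≠ C (ζ ^ (l : ℕ)) * P₂)
    (hQne : ∀ r : Fin 3, Q₁ ≠ C (ζ ^ (r : ℕ)) * Q₂)
    (G : Fin 3 → Fin 3 → MvPolynomial (Fin 2) F)
    -- `G l r` is the gcd of `P₁ - ζ^l P₂` and `Q₁ - ζ^r Q₂`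
    (hG1 : ∀ l r, G l r ∣ P₁ - C (ζ ^ (l : ℕ)) * P₂)
    (hG2 : ∀ l r, G l r ∣ Q₁ - C (ζ ^ (r : ℕ)) * Q₂)
    (hGmax : ∀ l r d, d ∣ P₁ - C (ζ ^ (l : ℕ)) * P₂ → d ∣ Q₁ - C (ζ ^ (r : ℕ)) * Q₂ →
      d ∣ G l r)
    (M : Fin 3 → Fin 3 → ℕ) (hM : ∀ l r, M l r = (G l r).totalDegree) :
    (∀ l, ∑ r, M l r = 2) ∧ (∀ r, ∑ l, M l r = 2) := by
  have heq1 : P₁ ^ 3 - P₂ ^ 3 = Q₁ ^ 3 - Q₂ ^ 3 := by linear_combination heq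
  have hGmax' : ∀ (a b : Fin 3) (d : MvPolynomial (Fin 2) F),
      d ∣ P₁ - C (ζ ^ (a : ℕ)) * P₂ → d ∣ Q₁ - C (ζ ^ (b : ℕ)) * Q₂ → d ∣ G a b := by
    intro a b d h1 h2
    have := hGmax (a : ℕ) (b : ℕ) d h1 h2
    simpa [Fin.cast_val_eq_self] using this
  have heq2 : Q₁ ^ 3 - Q₂ ^ 3 = P₁ ^ 3 - P₂ ^ 3 := heq1.symm
  constructor
  · intro l
    simp only [hM]
    exact rowSum ζ hζ P₁ Q₁ P₂ Q₂ hP₁ hP₂ hcop2 heq1 hPne G hG1 hG2 hGmax' l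
  · intro r
    simp only [hM]
    exact rowSum ζ hζ Q₁ P₁ Q₂ P₂ hQ₁ hQ₂ (fun d h1 h2 => hcop2 d h2 h1) heq2 hQne
      (fun a b => G b a) (fun a b => hG2 b a) (fun a b => hG1 b a)
      (fun a b d h1 h2 => hGmax' b a d h2 h1) r
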